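/- Let p be prime and suppose f ∈ F_p[[x]] satisfies a Mahler equation f(x) + d_1(x) f(x^p) + ... + d_k(x) f(x^{p^k}) = b(x) with b, d_1, ..., d_k ∈ F_p[x] of degree at most D. Then the F_p-vector space V = {α + β_0 f(x) + β_1 f(x^p) + ... + β_k f(x^{p^k}) : α, β_i ∈ F_p[x], deg α, deg β_i ≤ D} is closed under every section operator S_r, r ∈ {0, ..., p−1}. -/

import Mathlib

open PowerSeries

/-- Substitution of `x^q` into a formal power series: `(psub q z)(x) = z(x^q)`. -/
noncomputable def psub {R : Type*} [Semiring R] (q : ℕ) (z : PowerSeries R) : PowerSeries R :=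
  PowerSeries.mk fun n => if q ∣ n then PowerSeries.coeff (R := R) (n / q) z else 0

/-- The section operator `S_r` : sends `Σ z_n x^n` to `Σ z_{pn+r} x^n`. -/
noncomputable def sect {R : Type*} [Semiring R] (p r : ℕ) (z : PowerSeries R) : PowerSeries R :=
  PowerSeries.mk fun n => PowerSeries.coeff (R := R) (p * n + r) z

/-- The `x`-degree of a polynomial `E ∈ R[x][y]` (outer variable is `y`). -/
noncomputable def degX {R : Type*} [CommSemiring R] (E : Polynomial (Polynomial R)) : ℕ :=
  E.support.sup fun n => (E.coeff n).natDegree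


lemma psub_one {R : Type*} [Semiring R] (z : PowerSeries R) : psub 1 z = z := by
  ext n; simp [psub]

lemma psub_psub {R : Type*} [Semiring R] (a b : ℕ) (z : PowerSeries R) :
    psub a (psub b z) = psub (a * b) z := by
  ext n
  simp only [psub, coeff_mk]
  by_cases h1 : a ∣ n
  · rw [if_pos h1]
    by_cases h2 : b ∣ n / a
    · rw [if_pos h2, if_pos ((Nat.dvd_div_iff_mul_dvd h1).mp h2), Nat.div_div_eq_div_mul]
    · rw [if_neg h2, if_neg (fun h => h2 ((Nat.dvd_div_iff_mul_dvd h1).mpr h))]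
  · rw [if_neg h1, if_neg (fun h => h1 ((dvd_mul_right a b).trans h))]

lemma sect_add {R : Type*} [Semiring R] (p r : ℕ) (x y : PowerSeries R) :
    sect p r (x + y) = sect p r x + sect p r y := by
  ext n; simp [sect]

lemma sect_sum {R : Type*} [Semiring R] (p r : ℕ) {ι : Type*} (s : Finset ι)
    (g : ι → PowerSeries R) : sect p r (∑ i ∈ s, g i) = ∑ i ∈ s, sect p r (g i) := by
  ext n; simp [sect]

lemma sect_mul_psub {R : Type*} [Semiring R] (p r : ℕ) (hp : 0 < p) (hr : r < p)
    (g h : PowerSeries R) : sect p r (g * psub p h) = sect p r g * h := by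
  ext n
  rw [sect, coeff_mk, coeff_mul, coeff_mul]
  simp only [sect, psub, coeff_mk]
  rw [Finset.sum_congr rfl (fun x _ => mul_ite (p ∣ x.2) (coeff x.1 g) _ 0)]
  simp only [mul_zero]
  rw [← Finset.sum_filter]
  refine (Finset.sum_bij (fun (y : ℕ × ℕ) _ => (p * y.1 + r, p * y.2)) ?_ ?_ ?_ ?_).symm
  · rintro ⟨u, v⟩ huv
    rw [Finset.HasAntidiagonal.mem_antidiagonal] at huv
    simp only [Finset.mem_filter, Finset.HasAntidiagonal.mem_antidiagonal]
    exact ⟨by rw [← huv]; ring, dvd_mul_right p v⟩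
  · rintro ⟨u1, v1⟩ h1 ⟨u2, v2⟩ h2 he
    simp only [Prod.mk.injEq] at he
    have e1 : u1 = u2 :=
      Nat.eq_of_mul_eq_mul_left hp (Nat.add_right_cancel he.1)
    have e2 : v1 = v2 := Nat.eq_of_mul_eq_mul_left hp he.2
    simp [e1, e2]
  · rintro ⟨a, c⟩ hac
    simp only [Finset.mem_filter, Finset.HasAntidiagonal.mem_antidiagonal] at hac
    obtain ⟨hsum, m, hm⟩ := hac
    have hmn : m ≤ n := by
      by_contra hc
      push_neg at hc
      have : p * (n + 1) ≤ p * m := Nat.mul_le_mul_left p hc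
      have hexp : p * (n + 1) = p * n + p := by ring
      have : p * n + p ≤ c := by omega
      omega
    refine ⟨(n - m, m), ?_, ?_⟩
    · rw [Finset.HasAntidiagonal.mem_antidiagonal]; omega
    · have key : p * (n - m) + p * m = p * n := by
        rw [← Nat.mul_add, Nat.sub_add_cancel hmn]
      have ha : a = p * (n - m) + r := by omega
      simp [ha, hm]
  · rintro ⟨u, v⟩ huv
    simp [Nat.mul_div_cancel_left _ hp]

noncomputable def sectP {R : Type*} [Semiring R] (p r N : ℕ) (α : Polynomial R) : Polynomial R :=
  ∑ n ∈ Finset.range (N + 1), Polynomial.C (α.coeff (p * n + r)) * Polynomial.X ^ n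

lemma sectP_natDegree_le {R : Type*} [Semiring R] (p r N : ℕ) (α : Polynomial R) :
    (sectP p r N α).natDegree ≤ N := by
  apply Polynomial.natDegree_sum_le_of_forall_le
  intro n hn
  exact (Polynomial.natDegree_C_mul_le _ _).trans
    ((Polynomial.natDegree_X_pow_le _).trans (Nat.lt_succ_iff.mp (Finset.mem_range.mp hn)))

lemma sectP_coeff {R : Type*} [Semiring R] (p r N : ℕ) (α : Polynomial R) (n : ℕ) :
    (sectP p r N α).coeff n = if n ≤ N then α.coeff (p * n + r) else 0 := by
  rw [sectP, Polynomial.finset_sum_coeff]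
  simp only [Polynomial.coeff_C_mul, Polynomial.coeff_X_pow, mul_ite, mul_one, mul_zero]
  rw [Finset.sum_ite_eq (Finset.range (N + 1)) n fun m => α.coeff (p * m + r)]
  simp [Nat.lt_succ_iff]

lemma sectP_coe {R : Type*} [CommSemiring R] (p r N : ℕ) (α : Polynomial R)
    (hα : α.natDegree < p * (N + 1)) :
    (↑(sectP p r N α) : PowerSeries R) = sect p r (↑α : PowerSeries R) := by
  ext n
  rw [Polynomial.coeff_coe, sect, coeff_mk, Polynomial.coeff_coe, sectP_coeff]
  by_cases hn : n ≤ N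
  · rw [if_pos hn]
  · rw [if_neg hn]
    refine (Polynomial.coeff_eq_zero_of_natDegree_lt ?_).symm
    have : p * (N + 1) ≤ p * n := Nat.mul_le_mul_left p (by omega)
    omega

/-- If `f ∈ F_p[[x]]` satisfies the Mahler equation
`f(x) + d_1(x) f(x^p) + ⋯ + d_k(x) f(x^{p^k}) = b(x)` with all coefficient polynomials of
degree at most `D`, then the space
`V = {α + Σ_{i=0}^k β_i f(x^{p^i}) : deg α, deg β_i ≤ D}` is closed under every `S_r`. -/
theorem mahler_space_closed_under_sections (p : ℕ) (hp : p.Prime) (k D : ℕ)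
    (f : PowerSeries (ZMod p)) (b : Polynomial (ZMod p)) (dcoef : Fin k → Polynomial (ZMod p))
    (hb : b.natDegree ≤ D) (hdcoef : ∀ i, (dcoef i).natDegree ≤ D)
    (heq : f + ∑ i : Fin k, (dcoef i : PowerSeries (ZMod p)) * psub (p ^ ((i : ℕ) + 1)) f =
      (b : PowerSeries (ZMod p))) :
    ∀ r < p, ∀ z ∈ {z : PowerSeries (ZMod p) |
        ∃ (α : Polynomial (ZMod p)) (β : Fin (k + 1) → Polynomial (ZMod p)),
          α.natDegree ≤ D ∧ (∀ i, (β i).natDegree ≤ D) ∧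
          z = (α : PowerSeries (ZMod p)) +
            ∑ i, (β i : PowerSeries (ZMod p)) * psub (p ^ (i : ℕ)) f},
      sect p r z ∈ {z : PowerSeries (ZMod p) |
        ∃ (α : Polynomial (ZMod p)) (β : Fin (k + 1) → Polynomial (ZMod p)),
          α.natDegree ≤ D ∧ (∀ i, (β i).natDegree ≤ D) ∧
          z = (α : PowerSeries (ZMod p)) +
            ∑ i, (β i : PowerSeries (ZMod p)) * psub (p ^ (i : ℕ)) f} := by
  intro r hr z hz
  obtain ⟨α, β, hα, hβ, hzeq⟩ := hz
  have hp0 : 0 < p := hp.pos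
  have hp2 : 2 ≤ p := hp.two_le
  -- abbreviations
  set A : Polynomial (ZMod p) := α + β 0 * b with hA
  set G : Fin k → Polynomial (ZMod p) := fun i => β i.succ - β 0 * dcoef i with hG
  set Fi : Fin k → PowerSeries (ZMod p) := fun i => psub (p ^ ((i : ℕ) + 1)) f with hFi
  have hfb : f = (b : PowerSeries (ZMod p)) - ∑ i : Fin k, (dcoef i : PowerSeries (ZMod p)) * Fi i := by
    rw [← heq]; simp only [hFi]; ring
  -- rewrite z
  have hz2 : z = (α : PowerSeries (ZMod p)) + (β 0 : PowerSeries (ZMod p)) * f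
      + ∑ i : Fin k, (β i.succ : PowerSeries (ZMod p)) * Fi i := by
    rw [hzeq, Fin.sum_univ_succ]
    simp only [Fin.val_succ, Fin.val_zero, pow_zero, psub_one, hFi]
    ring
  have key : z = (A : PowerSeries (ZMod p)) + ∑ i : Fin k, (G i : PowerSeries (ZMod p)) * Fi i := by
    rw [hz2, hfb]
    have e1 : ∑ i : Fin k, (G i : PowerSeries (ZMod p)) * Fi i
        = ∑ i : Fin k, ((β i.succ : PowerSeries (ZMod p)) * Fi i
            - (β 0 : PowerSeries (ZMod p)) * ((dcoef i : PowerSeries (ZMod p)) * Fi i)) := by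
      refine Finset.sum_congr rfl fun i _ => ?_
      simp only [hG, Polynomial.coe_sub, Polynomial.coe_mul]
      ring
    rw [e1, Finset.sum_sub_distrib, ← Finset.mul_sum, hA]
    push_cast
    ring
  -- apply the section operator
  have hsplit : ∀ i : Fin k, Fi i = psub p (psub (p ^ (i : ℕ)) f) := by
    intro i
    rw [psub_psub]
    simp only [hFi]
    rw [pow_succ, mul_comm]
  have hsect : sect p r z = sect p r (A : PowerSeries (ZMod p))
      + ∑ i : Fin k, sect p r (G i : PowerSeries (ZMod p)) * psub (p ^ (i : ℕ)) f := by
    rw [key, sect_add, sect_sum]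
    congr 1
    refine Finset.sum_congr rfl fun i _ => ?_
    rw [hsplit i, sect_mul_psub p r hp0 hr]
  -- degree bounds
  have hAdeg : A.natDegree < p * (D + 1) := by
    have h1 : (β 0 * b).natDegree ≤ D + D :=
      le_trans (Polynomial.natDegree_mul_le) (add_le_add (hβ 0) hb)
    have h2 : A.natDegree ≤ D + D :=
      le_trans (Polynomial.natDegree_add_le _ _) (by simp only [max_le_iff]; omega)
    have h3 : 2 * (D + 1) ≤ p * (D + 1) := Nat.mul_le_mul_right _ hp2
    omega
  have hGdeg : ∀ i : Fin k, (G i).natDegree < p * (D + 1) := by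
    intro i
    have h1 : (β 0 * dcoef i).natDegree ≤ D + D :=
      le_trans (Polynomial.natDegree_mul_le) (add_le_add (hβ 0) (hdcoef i))
    have h2 : (G i).natDegree ≤ D + D := by
      refine le_trans (Polynomial.natDegree_sub_le _ _) ?_
      have := hβ i.succ
      simp only [max_le_iff]; omega
    have h3 : 2 * (D + 1) ≤ p * (D + 1) := Nat.mul_le_mul_right _ hp2
    omega
  -- witnesses
  refine ⟨sectP p r D A,
    fun j => if h : (j : ℕ) < k then sectP p r D (G ⟨(j : ℕ), h⟩) else 0,
    sectP_natDegree_le p r D A, fun j => ?_, ?_⟩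
  · dsimp only
    split
    · exact sectP_natDegree_le p r D _
    · simp
  · rw [hsect, sectP_coe p r D A hAdeg, Fin.sum_univ_castSucc]
    dsimp only
    simp only [Fin.val_last, Fin.coe_castSucc]
    rw [dif_neg (lt_irrefl k)]
    simp only [Polynomial.coe_zero, zero_mul, add_zero]
    congr 1
    refine Finset.sum_congr rfl fun i _ => ?_
    rw [dif_pos i.isLt]
    simp only [Fin.eta]
    rw [sectP_coe p r D _ (hGdeg i)]
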